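/- Let (W_∗, F^∗) be an ℝ-mixed Hodge structure on V. Then for every integer i one has W_i ⊗ ℂ = ⊕_{p+q ≤ i} I^{p,q}, and for every integer r one has F^r = ⊕_{p ≥ r} I^{p,q}. -/

import Mathlib

open TensorProduct

noncomputable section

namespace MHS

instance : RingHomSurjective (starRingEnd ℂ) :=
  ⟨fun x => ⟨star x, star_star x⟩⟩

variable (V : Type*) [AddCommGroup V] [Module ℝ V]

/-- The inclusion `v ↦ 1 ⊗ v` of `V` into its complexification `ℂ ⊗[ℝ] V`. -/
def incl : V →ₗ[ℝ] ℂ ⊗[ℝ] V := TensorProduct.mk ℝ ℂ V 1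

/-- Complex conjugation on the complexification `ℂ ⊗[ℝ] V`, as a
conjugate-linear (i.e. `starRingEnd ℂ`-semilinear) map. -/
def conjC : (ℂ ⊗[ℝ] V) →ₛₗ[starRingEnd ℂ] (ℂ ⊗[ℝ] V) where
  toFun := LinearMap.rTensor V (Complex.conjAe.toLinearMap : ℂ →ₗ[ℝ] ℂ)
  map_add' := fun x y => map_add _ x y
  map_smul' := by
    intro c x
    induction x using TensorProduct.induction_on with
    | zero => simp
    | tmul a v =>
        simp only [TensorProduct.smul_tmul', LinearMap.rTensor_tmul, smul_eq_mul,
          AlgEquiv.toLinearMap_apply, map_mul, starRingEnd_apply]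
        rfl
    | add x y hx hy =>
        simp only [smul_add, map_add]
        exact congrArg₂ (· + ·) hx hy

/-- The complexification `W ⊗ ℂ` of a real subspace `W ⊆ V`, as a complex
subspace of `ℂ ⊗[ℝ] V`. -/
def cx (W : Submodule ℝ V) : Submodule ℂ (ℂ ⊗[ℝ] V) :=
  Submodule.span ℂ (incl V '' (W : Set V))

variable {V}

/-- `(W, F)` is an `ℝ`-mixed Hodge structure on `V`:  `W` is an increasing
exhaustive filtration of `V` by real subspaces, `F` a decreasing exhaustive
filtration of `ℂ ⊗[ℝ] V` by complex subspaces, and for every `n, p` the induced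
filtration on `Gr^W_n = (W n ⊗ ℂ)/(W (n-1) ⊗ ℂ)` satisfies the weight `n`
Hodge decomposition conditions (expressed here at the level of preimages in
`W n ⊗ ℂ` of the relevant subspaces of the quotient). -/
structure IsRMHS (W : ℤ → Submodule ℝ V) (F : ℤ → Submodule ℂ (ℂ ⊗[ℝ] V)) : Prop where
  monoW : Monotone W
  antiF : Antitone F
  w_bot : ∃ a : ℤ, ∀ i ≤ a, W i = ⊥
  w_top : ∃ b : ℤ, ∀ i, b ≤ i → W i = ⊤
  f_top : ∃ a : ℤ, ∀ p ≤ a, F p = ⊤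
  f_bot : ∃ b : ℤ, ∀ p, b ≤ p → F p = ⊥
  gr_inf : ∀ n p : ℤ,
      ((F p ⊓ cx V (W n)) ⊔ cx V (W (n-1))) ⊓
        ((((F (n+1-p)).map (conjC V)) ⊓ cx V (W n)) ⊔ cx V (W (n-1)))
      = cx V (W (n-1))
  gr_sup : ∀ n p : ℤ,
      (F p ⊓ cx V (W n)) ⊔ ((((F (n+1-p)).map (conjC V)) ⊓ cx V (W n)) ⊔ cx V (W (n-1)))
      = cx V (W n)

/-- The subspace `R^{p,q} = (W_{p+q} ⊗ ℂ) ∩ F^p`. -/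
def Rpq (W : ℤ → Submodule ℝ V) (F : ℤ → Submodule ℂ (ℂ ⊗[ℝ] V)) (p q : ℤ) :
    Submodule ℂ (ℂ ⊗[ℝ] V) :=
  cx V (W (p + q)) ⊓ F p

/-- The subspace
`L^{p,q} = (W_{p+q} ⊗ ℂ) ∩ σ(F^q) + Σ_{i ≥ 2} (W_{p+q-i} ⊗ ℂ) ∩ σ(F^{q-i+1})`. -/
def Lpq (W : ℤ → Submodule ℝ V) (F : ℤ → Submodule ℂ (ℂ ⊗[ℝ] V)) (p q : ℤ) :
    Submodule ℂ (ℂ ⊗[ℝ] V) :=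
  (cx V (W (p + q)) ⊓ (F q).map (conjC V)) ⊔
    ⨆ i : ℤ, ⨆ _ : 2 ≤ i, (cx V (W (p + q - i)) ⊓ (F (q - i + 1)).map (conjC V))

/-- The Deligne subspace `I^{p,q} = R^{p,q} ∩ L^{p,q}`. -/
def Ipq (W : ℤ → Submodule ℝ V) (F : ℤ → Submodule ℂ (ℂ ⊗[ℝ] V)) (p q : ℤ) :
    Submodule ℂ (ℂ ⊗[ℝ] V) :=
  Rpq W F p q ⊓ Lpq W F p q

end MHS

namespace MHS

section Aux

variable {V : Type*} [AddCommGroup V] [Module ℝ V]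
variable {W : ℤ → Submodule ℝ V} {F : ℤ → Submodule ℂ (ℂ ⊗[ℝ] V)}

theorem cx_mono {W₁ W₂ : Submodule ℝ V} (hw : W₁ ≤ W₂) : cx V W₁ ≤ cx V W₂ :=
  Submodule.span_mono (Set.image_mono (f := incl V) hw)

theorem cx_bot : cx V (⊥ : Submodule ℝ V) = ⊥ := by
  apply le_bot_iff.mp
  apply Submodule.span_le.mpr
  rintro x ⟨v, hv, rfl⟩
  simp only [Submodule.bot_coe, Set.mem_singleton_iff] at hv
  subst hv
  simp [incl]

theorem cx_top : cx V (⊤ : Submodule ℝ V) = ⊤ := by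
  rw [eq_top_iff]
  rintro x -
  induction x using TensorProduct.induction_on with
  | zero => exact zero_mem _
  | tmul c v =>
      have hv : (1 : ℂ) ⊗ₜ[ℝ] v ∈ cx V (⊤ : Submodule ℝ V) :=
        Submodule.subset_span ⟨v, by simp, rfl⟩
      have : c ⊗ₜ[ℝ] v = c • ((1 : ℂ) ⊗ₜ[ℝ] v) := by
        rw [TensorProduct.smul_tmul', smul_eq_mul, mul_one]
      rw [this]
      exact Submodule.smul_mem _ _ hv
  | add a b ha hb => exact add_mem ha hb

theorem mem_Ipq {p q : ℤ} {x : ℂ ⊗[ℝ] V} :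
    x ∈ Ipq W F p q ↔ (x ∈ cx V (W (p + q)) ∧ x ∈ F p) ∧ x ∈ Lpq W F p q := by
  simp only [Ipq, Rpq, Submodule.mem_inf]

theorem Ipq_le_cx_inf (p q : ℤ) : Ipq W F p q ≤ cx V (W (p + q)) ⊓ F p := by
  intro x hx
  exact Submodule.mem_inf.mpr (mem_Ipq.mp hx).1

/-- Claim B: every element of `W_m ⊗ ℂ` for `m ≤ p+q-1` decomposes as an
`F^p`-part, a `σF^q`-part, and correction terms. -/
theorem claimB (h : IsRMHS W F) (p q : ℤ) :
    ∀ m : ℤ, m ≤ p + q - 1 → cx V (W m) ≤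
      (F p ⊓ cx V (W (p + q - 1))) ⊔
      (((F q).map (conjC V)) ⊓ cx V (W (p + q - 1))) ⊔
      (⨆ i : ℤ, ⨆ _ : 2 ≤ i, (cx V (W (p + q - i)) ⊓ (F (q - i + 1)).map (conjC V))) := by
  obtain ⟨aw, haw⟩ := h.w_bot
  suffices key : ∀ k : ℕ, ∀ m : ℤ, m ≤ aw + k → m ≤ p + q - 1 → cx V (W m) ≤
      (F p ⊓ cx V (W (p + q - 1))) ⊔
      (((F q).map (conjC V)) ⊓ cx V (W (p + q - 1))) ⊔
      (⨆ i : ℤ, ⨆ _ : 2 ≤ i, (cx V (W (p + q - i)) ⊓ (F (q - i + 1)).map (conjC V))) by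
    exact fun m hm => key (m - aw).toNat m (by omega) hm
  intro k
  induction k with
  | zero =>
      intro m hm1 _
      rw [haw m (by omega), cx_bot]
      exact bot_le
  | succ k ih =>
      intro m hm1 hm2
      intro x hx
      rw [← h.gr_sup m p] at hx
      obtain ⟨a, ha, y, hy, hxy⟩ := Submodule.mem_sup.mp hx
      obtain ⟨b, hb, c, hc, hyc⟩ := Submodule.mem_sup.mp hy
      rw [Submodule.mem_inf] at ha hb
      have hA : a ∈ (F p ⊓ cx V (W (p + q - 1))) ⊔
          (((F q).map (conjC V)) ⊓ cx V (W (p + q - 1))) ⊔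
          (⨆ i : ℤ, ⨆ _ : 2 ≤ i, (cx V (W (p + q - i)) ⊓ (F (q - i + 1)).map (conjC V))) := by
        exact Submodule.mem_sup_left (Submodule.mem_sup_left
          (Submodule.mem_inf.mpr ⟨ha.1, cx_mono (h.monoW hm2) ha.2⟩))
      have hB : b ∈ (F p ⊓ cx V (W (p + q - 1))) ⊔
          (((F q).map (conjC V)) ⊓ cx V (W (p + q - 1))) ⊔
          (⨆ i : ℤ, ⨆ _ : 2 ≤ i, (cx V (W (p + q - i)) ⊓ (F (q - i + 1)).map (conjC V))) := by
        rcases eq_or_lt_of_le hm2 with heq | hlt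
        · have e : m + 1 - p = q := by omega
          rw [e, heq] at hb
          exact Submodule.mem_sup_left (Submodule.mem_sup_right
            (Submodule.mem_inf.mpr ⟨hb.1, hb.2⟩))
        · apply Submodule.mem_sup_right
          have hle : cx V (W (p + q - (p + q - m))) ⊓
              (F (q - (p + q - m) + 1)).map (conjC V) ≤
              ⨆ i : ℤ, ⨆ _ : 2 ≤ i,
                (cx V (W (p + q - i)) ⊓ (F (q - i + 1)).map (conjC V)) :=
            le_iSup₂ (f := fun (i : ℤ) (_ : 2 ≤ i) =>
              cx V (W (p + q - i)) ⊓ (F (q - i + 1)).map (conjC V)) (p + q - m) (by omega)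
          have e1 : p + q - (p + q - m) = m := by ring
          have e2 : q - (p + q - m) + 1 = m + 1 - p := by ring
          rw [e1, e2] at hle
          exact hle (Submodule.mem_inf.mpr ⟨hb.2, hb.1⟩)
      have hC := ih (m - 1) (by omega) (by omega) hc
      rw [← hxy, ← hyc]
      exact add_mem hA (add_mem hB hC)

/-- Lemma C: an element of `W_{p+q} ∩ F^p` which is congruent mod `W_{p+q-1}`
to an element of `σF^q ∩ W_{p+q}` can be corrected into `I^{p,q}` by an
element of `F^p ∩ W_{p+q-1}`. -/
theorem lemC (h : IsRMHS W F) (p q : ℤ) :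
    cx V (W (p + q)) ⊓ F p ⊓
        ((((F q).map (conjC V)) ⊓ cx V (W (p + q))) ⊔ cx V (W (p + q - 1)))
      ≤ Ipq W F p q ⊔ (F p ⊓ cx V (W (p + q - 1))) := by
  intro v hv
  rw [Submodule.mem_inf, Submodule.mem_inf] at hv
  obtain ⟨⟨hv1, hv2⟩, hv3⟩ := hv
  obtain ⟨w, hw, d, hd, hwd⟩ := Submodule.mem_sup.mp hv3
  rw [Submodule.mem_inf] at hw
  have hd' := claimB h p q (p + q - 1) le_rfl hd
  obtain ⟨y, hy, s, hs, hys⟩ := Submodule.mem_sup.mp hd'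
  obtain ⟨cc, hcc, b', hb', hcb⟩ := Submodule.mem_sup.mp hy
  rw [Submodule.mem_inf] at hcc hb'
  have hv' : v - cc = w + b' + s := by
    rw [← hwd, ← hys, ← hcb]; abel
  have hI : v - cc ∈ Ipq W F p q := by
    rw [mem_Ipq]
    refine ⟨⟨sub_mem hv1 (cx_mono (h.monoW (by omega)) hcc.2), sub_mem hv2 hcc.1⟩, ?_⟩
    rw [hv']
    show w + b' + s ∈ (cx V (W (p + q)) ⊓ (F q).map (conjC V)) ⊔
      ⨆ i : ℤ, ⨆ _ : 2 ≤ i, (cx V (W (p + q - i)) ⊓ (F (q - i + 1)).map (conjC V))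
    refine add_mem (Submodule.mem_sup_left ?_) (Submodule.mem_sup_right hs)
    exact Submodule.mem_inf.mpr
      ⟨add_mem hw.2 (cx_mono (h.monoW (by omega)) hb'.2), add_mem hw.1 hb'.1⟩
  refine Submodule.mem_sup.mpr ⟨v - cc, hI, cc, Submodule.mem_inf.mpr ⟨hcc.1, hcc.2⟩, ?_⟩
  abel

/-- Lemma A: `W_n ∩ F^p ⊆ (Σ_{p' ≥ p} I^{p', n-p'}) + F^p ∩ W_{n-1}`. -/
theorem lemA (h : IsRMHS W F) (n : ℤ) (p : ℤ) :
    cx V (W n) ⊓ F p ≤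
      (⨆ p' : ℤ, ⨆ _ : p ≤ p', Ipq W F p' (n - p')) ⊔ (F p ⊓ cx V (W (n - 1))) := by
  obtain ⟨bf, hbf⟩ := h.f_bot
  suffices key : ∀ k : ℕ, ∀ p : ℤ, bf - k ≤ p → cx V (W n) ⊓ F p ≤
      (⨆ p' : ℤ, ⨆ _ : p ≤ p', Ipq W F p' (n - p')) ⊔ (F p ⊓ cx V (W (n - 1))) by
    exact key (bf - p).toNat p (by omega)
  intro k
  induction k with
  | zero =>
      intro p hp
      rw [hbf p (by omega)]
      simp
  | succ k ih =>
      intro p hp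
      intro x hx
      rw [Submodule.mem_inf] at hx
      obtain ⟨hxW, hxF⟩ := hx
      have hx1 := hxW
      rw [← h.gr_sup n (p + 1)] at hx1
      obtain ⟨a, ha, y, hy, hay⟩ := Submodule.mem_sup.mp hx1
      obtain ⟨b, hb, c, hc, hbc⟩ := Submodule.mem_sup.mp hy
      rw [Submodule.mem_inf] at ha hb
      have hA := ih (p + 1) (by omega) (Submodule.mem_inf.mpr ⟨ha.2, ha.1⟩)
      obtain ⟨u, hu, c1, hc1, huc⟩ := Submodule.mem_sup.mp hA
      rw [Submodule.mem_inf] at hc1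
      -- the supremum over p' ≥ p+1 lands in `cx (W n) ⊓ F p`
      have hsupI : (⨆ p' : ℤ, ⨆ _ : p + 1 ≤ p', Ipq W F p' (n - p')) ≤
          cx V (W n) ⊓ F p := by
        refine iSup₂_le fun p' hp' => ?_
        refine le_trans (Ipq_le_cx_inf p' (n - p')) ?_
        have e : p' + (n - p') = n := by ring
        rw [e]
        exact inf_le_inf_left _ (h.antiF (by omega))
      have hxm : x - u - c1 ∈ cx V (W n) ⊓ F p := by
        have hu' := hsupI hu
        rw [Submodule.mem_inf] at hu' ⊢
        exact ⟨sub_mem (sub_mem hxW hu'.1) (cx_mono (h.monoW (by omega)) hc1.2),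
          sub_mem (sub_mem hxF hu'.2) (h.antiF (by omega) hc1.1)⟩
      have hbmem : x - u - c1 ∈
          (((F (n - p)).map (conjC V)) ⊓ cx V (W n)) ⊔ cx V (W (n - 1)) := by
        have hveq : x - u - c1 = b + c := by
          rw [← hay, ← hbc, ← huc]; abel
        rw [hveq]
        have e : n + 1 - (p + 1) = n - p := by ring
        rw [e] at hb
        exact add_mem (Submodule.mem_sup_left (Submodule.mem_inf.mpr ⟨hb.1, hb.2⟩))
          (Submodule.mem_sup_right hc)
      have hlc := lemC h p (n - p)
      rw [show p + (n - p) = n from by ring] at hlc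
      have hres := hlc (Submodule.mem_inf.mpr ⟨hxm, hbmem⟩)
      obtain ⟨i0, hi0, c2, hc2, hic⟩ := Submodule.mem_sup.mp hres
      rw [Submodule.mem_inf] at hc2
      refine Submodule.mem_sup.mpr ⟨u + i0, ?_, c1 + c2, ?_, ?_⟩
      · have hmono : (⨆ p' : ℤ, ⨆ _ : p + 1 ≤ p', Ipq W F p' (n - p')) ≤
            ⨆ p' : ℤ, ⨆ _ : p ≤ p', Ipq W F p' (n - p') :=
          iSup_mono fun p' => iSup_le fun hp' =>
            le_iSup (fun (_ : p ≤ p') => Ipq W F p' (n - p')) (by omega)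
        refine add_mem (hmono hu) ?_
        exact le_iSup₂ (f := fun (p' : ℤ) (_ : p ≤ p') => Ipq W F p' (n - p')) p le_rfl hi0
      · exact Submodule.mem_inf.mpr
          ⟨add_mem (h.antiF (by omega) hc1.1) hc2.1, add_mem hc1.2 hc2.2⟩
      · have hx2 : x = u + c1 + (i0 + c2) := by rw [hic]; abel
        rw [hx2]; abel

/-- Lemma D: `F^r ∩ W_n` is contained in any subspace containing all
`I^{p', q'}` with `p' ≥ r` and `p' + q' ≤ n`. -/
theorem lemD (h : IsRMHS W F) (r : ℤ) :
    ∀ (n : ℤ) (T : Submodule ℂ (ℂ ⊗[ℝ] V)),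
      (∀ p' m : ℤ, r ≤ p' → m ≤ n → Ipq W F p' (m - p') ≤ T) →
      F r ⊓ cx V (W n) ≤ T := by
  obtain ⟨aw, haw⟩ := h.w_bot
  suffices key : ∀ k : ℕ, ∀ n : ℤ, n ≤ aw + k → ∀ T : Submodule ℂ (ℂ ⊗[ℝ] V),
      (∀ p' m : ℤ, r ≤ p' → m ≤ n → Ipq W F p' (m - p') ≤ T) →
      F r ⊓ cx V (W n) ≤ T by
    intro n T hT
    exact key (n - aw).toNat n (by omega) T hT
  intro k
  induction k with
  | zero =>
      intro n hn T _
      rw [haw n (by omega), cx_bot]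
      simp
  | succ k ih =>
      intro n hn T hT
      intro x hx
      rw [Submodule.mem_inf] at hx
      have hres := lemA h n r (Submodule.mem_inf.mpr ⟨hx.2, hx.1⟩)
      obtain ⟨u, hu, c, hc, huc⟩ := Submodule.mem_sup.mp hres
      rw [Submodule.mem_inf] at hc
      have hu' : u ∈ T :=
        (iSup₂_le fun p' hp' => hT p' n hp' le_rfl) hu
      have hc' : c ∈ T :=
        ih (n - 1) (by omega) T (fun p' m hp' hm => hT p' m hp' (by omega))
          (Submodule.mem_inf.mpr ⟨hc.1, hc.2⟩)
      rw [← huc]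
      exact add_mem hu' hc'

end Aux

end MHS

/-- For an `ℝ`-mixed Hodge structure `(W, F)` on `V`, the
Deligne subspaces recover both filtrations:
`W_i ⊗ ℂ = ⊕_{p+q ≤ i} I^{p,q}` and `F^r = ⊕_{p ≥ r} I^{p,q}`. -/
theorem deligne_splitting_recovers_filtrations
    (V : Type*) [AddCommGroup V] [Module ℝ V] [FiniteDimensional ℝ V]
    (W : ℤ → Submodule ℝ V) (F : ℤ → Submodule ℂ (ℂ ⊗[ℝ] V))
    (h : MHS.IsRMHS W F) :
    (∀ i : ℤ, MHS.cx V (W i) =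
      ⨆ pq : ℤ × ℤ, ⨆ _ : pq.1 + pq.2 ≤ i, MHS.Ipq W F pq.1 pq.2) ∧
    (∀ r : ℤ, F r =
      ⨆ pq : ℤ × ℤ, ⨆ _ : r ≤ pq.1, MHS.Ipq W F pq.1 pq.2) := by
  constructor
  · intro i
    apply le_antisymm
    · obtain ⟨af, haf⟩ := h.f_top
      have hFtop : F af = ⊤ := haf af le_rfl
      have : MHS.cx V (W i) = F af ⊓ MHS.cx V (W i) := by rw [hFtop, top_inf_eq]
      rw [this]
      refine MHS.lemD h af i _ ?_
      intro p' m _ hm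
      exact le_iSup₂ (f := fun (pq : ℤ × ℤ) (_ : pq.1 + pq.2 ≤ i) =>
        MHS.Ipq W F pq.1 pq.2) (p', m - p') (by simp; omega)
    · refine iSup₂_le fun pq hpq => ?_
      refine le_trans (MHS.Ipq_le_cx_inf pq.1 pq.2) ?_
      exact le_trans inf_le_left (MHS.cx_mono (h.monoW hpq))
  · intro r
    apply le_antisymm
    · obtain ⟨bw, hbw⟩ := h.w_top
      have hWtop : MHS.cx V (W bw) = ⊤ := by rw [hbw bw le_rfl, MHS.cx_top]
      have : F r = F r ⊓ MHS.cx V (W bw) := by rw [hWtop, inf_top_eq]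
      rw [this]
      refine MHS.lemD h r bw _ ?_
      intro p' m hp' _
      exact le_iSup₂ (f := fun (pq : ℤ × ℤ) (_ : r ≤ pq.1) =>
        MHS.Ipq W F pq.1 pq.2) (p', m - p') hp'
    · refine iSup₂_le fun pq hpq => ?_
      refine le_trans (MHS.Ipq_le_cx_inf pq.1 pq.2) ?_
      exact le_trans inf_le_right (h.antiF hpq)
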